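/- Let W_1,...,W_k be a measurable partition of a measure space (M,μ), let c: {1,...,k} × M → ℝ be a cost and φ ∈ ℝ^k such that for all x ∈ W_i and all j, c(i,x) - φ_i ≤ c(j,x) - φ_j. Then for any other measurable partition X_1,...,X_k of M with μ(X_i) = μ(W_i) for all i, we have Σ_i ∫_{W_i} c(i,x) dμ ≤ Σ_j ∫_{X_j} c(j,x) dμ. -/

import Mathlib

open MeasureTheory

lemma split_integral {k : ℕ} {M : Type*} [MeasurableSpace M]
    (μ : Measure M) (s : Set M) (hs : MeasurableSet s)
    (X : Fin k → Set M) (hXmeas : ∀ i, MeasurableSet (X i))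
    (hXdisj : Pairwise (Function.onFun Disjoint X))
    (hXcover : (⋃ i, X i) = Set.univ)
    (f : M → ℝ) (hf : Integrable f μ) :
    ∫ x in s, f x ∂μ = ∑ j : Fin k, ∫ x in s ∩ X j, f x ∂μ := by
  have hu : s = ⋃ j, s ∩ X j := by
    rw [← Set.inter_iUnion, hXcover, Set.inter_univ]
  have h := integral_iUnion (μ := μ) (f := f) (s := fun j => s ∩ X j)
    (fun j => hs.inter (hXmeas j))
    (fun i j hij => (hXdisj hij).mono (Set.inter_subset_right) (Set.inter_subset_right))
    (by rw [← hu]; exact hf.integrableOn)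
  conv_lhs => rw [hu]
  rw [h, tsum_fintype]

lemma split_measure {k : ℕ} {M : Type*} [MeasurableSpace M]
    (μ : Measure M) [IsFiniteMeasure μ] (s : Set M) (hs : MeasurableSet s)
    (X : Fin k → Set M) (hXmeas : ∀ i, MeasurableSet (X i))
    (hXdisj : Pairwise (Function.onFun Disjoint X))
    (hXcover : (⋃ i, X i) = Set.univ) :
    (μ s).toReal = ∑ j : Fin k, (μ (s ∩ X j)).toReal := by
  have hu : s = ⋃ j, s ∩ X j := by
    rw [← Set.inter_iUnion, hXcover, Set.inter_univ]
  have h := measure_iUnion (μ := μ) (f := fun j => s ∩ X j)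
    (fun i j hij => (hXdisj hij).mono (Set.inter_subset_right) (Set.inter_subset_right))
    (fun j => hs.inter (hXmeas j))
  rw [tsum_fintype] at h
  rw [show μ s = ∑ j : Fin k, μ (s ∩ X j) by rw [← h, ← hu]]
  rw [ENNReal.toReal_sum (fun j _ => measure_ne_top μ _)]

theorem laguerre_cells_minimize_cost {k : ℕ} {M : Type*} [MeasurableSpace M]
    (μ : Measure M) [IsFiniteMeasure μ]
    (W X : Fin k → Set M) (c : Fin k → M → ℝ) (φ : Fin k → ℝ)
    (hWmeas : ∀ i, MeasurableSet (W i)) (hXmeas : ∀ i, MeasurableSet (X i))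
    (hWdisj : Pairwise (Function.onFun Disjoint W))
    (hXdisj : Pairwise (Function.onFun Disjoint X))
    (hWcover : (⋃ i, W i) = Set.univ) (hXcover : (⋃ i, X i) = Set.univ)
    (hint : ∀ i, Integrable (c i) μ)
    (hmin : ∀ i, ∀ x ∈ W i, ∀ j, c i x - φ i ≤ c j x - φ j)
    (hμeq : ∀ i, μ (X i) = μ (W i)) :
    ∑ i : Fin k, ∫ x in W i, c i x ∂μ ≤ ∑ j : Fin k, ∫ x in X j, c j x ∂μ := by
  have key : ∀ i j, ∫ x in W i ∩ X j, c i x ∂μ ≤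
      ∫ x in W i ∩ X j, c j x ∂μ + (φ i - φ j) * (μ (W i ∩ X j)).toReal := by
    intro i j
    have hmeas : MeasurableSet (W i ∩ X j) := (hWmeas i).inter (hXmeas j)
    have h1 : ∫ x in W i ∩ X j, c i x ∂μ ≤ ∫ x in W i ∩ X j, (c j x + (φ i - φ j)) ∂μ := by
      apply setIntegral_mono_on (hint i).integrableOn
        (((hint j).add (integrable_const _)).integrableOn) hmeas
      intro x hx
      have := hmin i x hx.1 j
      simp only [Pi.add_apply]
      linarith
    calc ∫ x in W i ∩ X j, c i x ∂μ ≤ ∫ x in W i ∩ X j, (c j x + (φ i - φ j)) ∂μ := h1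
      _ = ∫ x in W i ∩ X j, c j x ∂μ + (φ i - φ j) * (μ (W i ∩ X j)).toReal := by
          rw [integral_add (hint j).integrableOn (integrable_const _).integrableOn,
            setIntegral_const, smul_eq_mul, mul_comm]
          rfl
  calc ∑ i : Fin k, ∫ x in W i, c i x ∂μ
      = ∑ i : Fin k, ∑ j : Fin k, ∫ x in W i ∩ X j, c i x ∂μ := by
        exact Finset.sum_congr rfl fun i _ =>
          split_integral μ (W i) (hWmeas i) X hXmeas hXdisj hXcover (c i) (hint i)
    _ ≤ ∑ i : Fin k, ∑ j : Fin k,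
        (∫ x in W i ∩ X j, c j x ∂μ + (φ i - φ j) * (μ (W i ∩ X j)).toReal) :=
        Finset.sum_le_sum fun i _ => Finset.sum_le_sum fun j _ => key i j
    _ = ∑ j : Fin k, ∫ x in X j, c j x ∂μ := by
        simp only [Finset.sum_add_distrib]
        have h1 : ∑ i : Fin k, ∑ j : Fin k, ∫ x in W i ∩ X j, c j x ∂μ
            = ∑ j : Fin k, ∫ x in X j, c j x ∂μ := by
          rw [Finset.sum_comm]
          refine Finset.sum_congr rfl fun j _ => ?_
          have := split_integral μ (X j) (hXmeas j) W hWmeas hWdisj hWcover (c j) (hint j)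
          rw [this]
          exact Finset.sum_congr rfl fun i _ => by rw [Set.inter_comm]
        have h2 : ∑ i : Fin k, ∑ j : Fin k, (φ i - φ j) * (μ (W i ∩ X j)).toReal = 0 := by
          have e1 : ∑ i : Fin k, ∑ j : Fin k, φ i * (μ (W i ∩ X j)).toReal
              = ∑ i : Fin k, φ i * (μ (W i)).toReal := by
            refine Finset.sum_congr rfl fun i _ => ?_
            rw [split_measure μ (W i) (hWmeas i) X hXmeas hXdisj hXcover, Finset.mul_sum]
          have e2 : ∑ i : Fin k, ∑ j : Fin k, φ j * (μ (W i ∩ X j)).toReal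
              = ∑ j : Fin k, φ j * (μ (W j)).toReal := by
            rw [Finset.sum_comm]
            refine Finset.sum_congr rfl fun j _ => ?_
            rw [show ∑ i : Fin k, φ j * (μ (W i ∩ X j)).toReal
                = φ j * ∑ i : Fin k, (μ (X j ∩ W i)).toReal by
              rw [Finset.mul_sum]; exact Finset.sum_congr rfl fun i _ => by rw [Set.inter_comm]]
            rw [← split_measure μ (X j) (hXmeas j) W hWmeas hWdisj hWcover, hμeq]
          simp only [sub_mul, Finset.sum_sub_distrib]
          rw [e1, e2, sub_self]
        rw [h1, h2, add_zero]
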